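/- Let $n\in\mathbb{N}$ and $2\le p\le q\le r\le\infty$. For every real array $A=(A_{i,j,k})_{i,j,k=1}^n$, the injective tensor norm satisfies $\sup_{\|x\|_p=\|y\|_q=\|z\|_r=1}\big|\sum_{i,j,k=1}^n A_{i,j,k}x_iy_jz_k\big| \ge \tfrac12\, n^{-\frac1p-\frac1q-\frac1r-1}\sum_{i,j,k=1}^n |A_{i,j,k}|$. -/

import Mathlib

open Finset
open scoped ENNReal NNReal

/-- The `ℓ_p` norm on `ℝ^n` for an extended real exponent `p`
(with `pnorm ∞ x = max_i |x i|`). -/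
noncomputable def pnorm (p : ℝ≥0∞) {n : ℕ} (x : Fin n → ℝ) : ℝ :=
  if p = ∞ then ⨆ i, |x i| else (∑ i, |x i| ^ p.toReal) ^ (1 / p.toReal)

namespace Stmt0Aux

def chiZ (b : Bool) : ℤ := if b then 1 else -1

noncomputable def chi {n : ℕ} (s : Fin n → Bool) (i : Fin n) : ℝ := ((chiZ (s i) : ℤ) : ℝ)

def SZ {n : ℕ} (s : Fin n → Bool) : ℤ := ∑ i, chiZ (s i)

def cntT {n : ℕ} (s : Fin n → Bool) : ℕ := (univ.filter fun i => s i = true).card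

lemma SZ_eq {n : ℕ} (s : Fin n → Bool) : SZ s = 2 * (cntT s : ℤ) - n := by
  have h : ∀ i, chiZ (s i) = 2 * (if s i = true then (1:ℤ) else 0) - 1 := by
    intro i; cases h : s i <;> simp [chiZ]
  have hc : (cntT s : ℤ) = ∑ i, (if s i = true then (1:ℤ) else 0) := by
    unfold cntT
    rw [Finset.card_filter]
    push_cast
    simp
  calc SZ s = ∑ i, (2 * (if s i = true then (1:ℤ) else 0) - 1) := by
        unfold SZ; exact Finset.sum_congr rfl fun i _ => h i
    _ = 2 * (∑ i, (if s i = true then (1:ℤ) else 0)) - n := by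
        rw [Finset.sum_sub_distrib, ← Finset.mul_sum]; simp
    _ = 2 * (cntT s : ℤ) - n := by rw [hc]

lemma count_trues (m j : ℕ) :
    (univ.filter fun s : Fin m → Bool => cntT s = j).card = m.choose j := by
  have : (univ.filter fun s : Fin m → Bool => cntT s = j).card
      = (Finset.powersetCard j (univ : Finset (Fin m))).card := by
    refine Finset.card_bij' (fun s _ => univ.filter fun i => s i = true)
      (fun T _ => fun i => decide (i ∈ T)) ?_ ?_ ?_ ?_
    · intro s hs
      simp only [Finset.mem_filter, Finset.mem_univ, true_and] at hs
      rw [Finset.mem_powersetCard]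
      exact ⟨Finset.filter_subset _ _, hs⟩
    · intro T hT
      simp only [Finset.mem_powersetCard] at hT
      rw [Finset.mem_filter]; refine ⟨Finset.mem_univ _, ?_⟩; unfold cntT
      rw [← hT.2]
      congr 1
      ext i
      simp
    · intro s hs
      funext i
      simp
    · intro T hT
      ext i
      simp only [Finset.mem_filter, Finset.mem_univ, true_and, decide_eq_true_eq]
  rw [this, Finset.card_powersetCard, Finset.card_univ, Fintype.card_fin]

def Ncnt (m : ℕ) (t : ℤ) : ℕ := (univ.filter fun s : Fin m → Bool => SZ s = t).card

lemma Ncnt_eq (m : ℕ) (t : ℤ) (j : ℕ) (h : (j:ℤ) * 2 = m + t) :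
    Ncnt m t = m.choose j := by
  rw [← count_trues m j]
  unfold Ncnt
  congr 1
  apply Finset.filter_congr
  intro s _
  rw [SZ_eq]
  constructor
  · intro hs
    have : (cntT s : ℤ) = j := by omega
    exact_mod_cast this
  · intro hs
    have : (cntT s : ℤ) = j := by exact_mod_cast hs
    omega


lemma choose_id (k : ℕ) :
    (2*k+2).choose (k+1) * ((k+1)*(k+1)) = (2*k).choose k * ((2*k+1)*(2*k+2)) := by
  have h1 : (2*k+1) * (2*k).choose k = (2*k+1).choose (k+1) * (k+1) := by
    have := Nat.add_one_mul_choose_eq (2*k) k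
    simpa [Nat.succ_eq_add_one] using this
  have hsymm : (2*k+1).choose (k+1) = (2*k+1).choose k := by
    have h : k ≤ 2*k+1 := by omega
    have := Nat.choose_symm h
    have he : 2*k+1-k = k+1 := by omega
    rw [he] at this
    exact this
  have h2 : (2*k+2) * (2*k+1).choose k = (2*k+2).choose (k+1) * (k+1) := by
    have := Nat.add_one_mul_choose_eq (2*k+1) k
    simpa [Nat.succ_eq_add_one, show 2*k+1+1 = 2*k+2 by omega] using this
  calc (2*k+2).choose (k+1) * ((k+1)*(k+1)) = ((2*k+2).choose (k+1) * (k+1)) * (k+1) := by ring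
    _ = ((2*k+2) * (2*k+1).choose k) * (k+1) := by rw [h2]
    _ = ((2*k+1).choose (k+1) * (k+1)) * (2*k+2) := by rw [hsymm]; ring
    _ = ((2*k+1) * (2*k).choose k) * (2*k+2) := by rw [h1]
    _ = (2*k).choose k * ((2*k+1)*(2*k+2)) := by ring

lemma central_sq (k : ℕ) (hk : 1 ≤ k) :
    (16:ℝ)^k ≤ 4*k*((Nat.choose (2*k) k : ℝ))^2 := by
  induction k, hk using Nat.le_induction with
  | base => norm_num
  | succ k hk ih =>
    set C : ℝ := (Nat.choose (2*k) k : ℝ) with hC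
    set C' : ℝ := (Nat.choose (2*(k+1)) (k+1) : ℝ) with hC'
    have hid : C' * (((k:ℝ)+1)*((k:ℝ)+1)) = C * ((2*(k:ℝ)+1)*(2*(k:ℝ)+2)) := by
      have := choose_id k
      have hcast := congrArg (fun x : ℕ => (x:ℝ)) this
      push_cast at hcast
      rw [hC, hC']
      push_cast
      convert hcast using 2 <;> push_cast <;> ring
    have hkp : (0:ℝ) < (k:ℝ)+1 := by positivity
    have hCnn : (0:ℝ) ≤ C := by rw [hC]; positivity
    -- multiply target by ((k:ℝ)+1)^4
    have key : ((k:ℝ)+1)^4 * (16:ℝ)^(k+1) ≤ ((k:ℝ)+1)^4 * (4*((k:ℝ)+1)*C'^2) := by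
      have e1 : ((k:ℝ)+1)^4 * (4*((k:ℝ)+1)*C'^2)
          = 4*((k:ℝ)+1) * (C' * (((k:ℝ)+1)*((k:ℝ)+1)))^2 := by ring
      rw [e1, hid]
      have e2 : 4*((k:ℝ)+1) * (C * ((2*(k:ℝ)+1)*(2*(k:ℝ)+2)))^2
          = (16*((k:ℝ)+1)^3*(2*(k:ℝ)+1)^2) * C^2 := by ring
      rw [e2]
      have e3 : ((k:ℝ)+1)^4 * (16:ℝ)^(k+1) = (16*((k:ℝ)+1)^3*(4*(k:ℝ)*((k:ℝ)+1))) * (16:ℝ)^k / (4*(k:ℝ)) := by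
        have hk0 : (0:ℝ) < (k:ℝ) := by exact_mod_cast hk
        field_simp
        ring
      rw [e3]
      rw [div_le_iff₀ (by positivity)]
      calc (16*((k:ℝ)+1)^3*(4*(k:ℝ)*((k:ℝ)+1))) * (16:ℝ)^k
          ≤ (16*((k:ℝ)+1)^3*(4*(k:ℝ)*((k:ℝ)+1))) * (4*(k:ℝ)*C^2) := by
            apply mul_le_mul_of_nonneg_left ih (by positivity)
        _ = ((16*((k:ℝ)+1)^3*(4*(k:ℝ)*((k:ℝ)+1))) * C^2) * (4*(k:ℝ)) := by ring
        _ ≤ ((16*((k:ℝ)+1)^3*(2*(k:ℝ)+1)^2) * C^2) * (4*(k:ℝ)) := by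
            apply mul_le_mul_of_nonneg_right _ (by positivity)
            apply mul_le_mul_of_nonneg_right _ (by positivity)
            apply mul_le_mul_of_nonneg_left _ (by positivity)
            nlinarith [sq_nonneg (2*(k:ℝ)+1)]
    have this : (16:ℝ)^(k+1) ≤ 4*((k:ℝ)+1)*C'^2 :=
      (mul_le_mul_iff_right₀ (by positivity : (0:ℝ) < ((k:ℝ)+1)^4)).mp key
    convert this using 2
    push_cast
    ring


noncomputable def Dval (m : ℕ) : ℝ := 2*(Ncnt m 0 : ℝ) + (Ncnt m 1 : ℝ) + (Ncnt m (-1) : ℝ)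

lemma Dval_nonneg (m : ℕ) : 0 ≤ Dval m := by unfold Dval; positivity

lemma Dval_sq (m : ℕ) : (4:ℝ)^(m+1) ≤ 2*((m:ℝ)+1) * (Dval m)^2 := by
  rcases Nat.even_or_odd m with ⟨k, hk⟩ | ⟨k, hk⟩
  · have hm : m = 2*k := by omega
    subst hm
    have hN0 : Ncnt (2*k) 0 = Nat.choose (2*k) k := Ncnt_eq (2*k) 0 k (by push_cast; ring)
    set C : ℝ := (Nat.choose (2*k) k : ℝ) with hCdef
    have hD : 2*C ≤ Dval (2*k) := by
      unfold Dval
      rw [hN0]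
      have h1 : (0:ℝ) ≤ (Ncnt (2*k) 1 : ℝ) := by positivity
      have h2 : (0:ℝ) ≤ (Ncnt (2*k) (-1) : ℝ) := by positivity
      linarith
    have hCnn : (0:ℝ) ≤ 2*C := by positivity
    have hsq : (2*C)^2 ≤ (Dval (2*k))^2 := by
      apply pow_le_pow_left₀ hCnn hD
    rcases Nat.eq_zero_or_pos k with hk0 | hk1
    · subst hk0
      simp only [Nat.mul_zero, Nat.choose_self] at hCdef hsq ⊢
      have : C = 1 := by rw [hCdef]; norm_num
      rw [this] at hsq
      norm_num at hsq ⊢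
      nlinarith [hsq]
    · have hc := central_sq k hk1
      have e4 : (4:ℝ)^(2*k+1) = 4 * (16:ℝ)^k := by
        rw [pow_succ, pow_mul]; norm_num; ring
      rw [e4]
      calc 4 * (16:ℝ)^k ≤ 4 * (4*(k:ℝ)*C^2) := by linarith
        _ ≤ (2*((2*(k:ℝ))+1)) * (2*C)^2 := by nlinarith [sq_nonneg C]
        _ ≤ 2*(((2*k:ℕ):ℝ)+1) * (Dval (2*k))^2 := by
            push_cast
            apply mul_le_mul_of_nonneg_left hsq (by positivity)
  · have hm : m = 2*k+1 := by omega
    subst hm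
    have hN1 : Ncnt (2*k+1) 1 = Nat.choose (2*k+1) (k+1) :=
      Ncnt_eq (2*k+1) 1 (k+1) (by push_cast; ring)
    have hN2 : Ncnt (2*k+1) (-1) = Nat.choose (2*k+1) k :=
      Ncnt_eq (2*k+1) (-1) k (by push_cast; ring)
    have hpascal : Nat.choose (2*(k+1)) (k+1) = Nat.choose (2*k+1) k + Nat.choose (2*k+1) (k+1) := by
      have := Nat.choose_succ_succ (2*k+1) k
      rw [show 2*(k+1) = 2*k+1+1 by ring]
      exact this
    set C' : ℝ := (Nat.choose (2*(k+1)) (k+1) : ℝ) with hC'def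
    have hD : C' ≤ Dval (2*k+1) := by
      unfold Dval
      rw [hN1, hN2, hC'def, hpascal]
      push_cast
      have h1 : (0:ℝ) ≤ (Ncnt (2*k+1) 0 : ℝ) := by positivity
      linarith
    have hsq : C'^2 ≤ (Dval (2*k+1))^2 := by
      apply pow_le_pow_left₀ (by rw [hC'def]; positivity) hD
    have hc := central_sq (k+1) (by omega)
    have e4 : (4:ℝ)^(2*k+1+1) = (16:ℝ)^(k+1) := by
      rw [show 2*k+1+1 = 2*(k+1) by ring, pow_mul]; norm_num
    rw [e4]
    calc (16:ℝ)^(k+1) ≤ 4*((k:ℝ)+1)*C'^2 := by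
          convert hc using 3
          push_cast; ring
      _ ≤ 2*(((2*k+1:ℕ):ℝ)+1) * (Dval (2*k+1))^2 := by
          push_cast
          have : (0:ℝ) ≤ 4*((k:ℝ)+1) := by positivity
          nlinarith [hsq, sq_nonneg C']


def xorEquiv {n : ℕ} (θ : Fin n → Bool) : (Fin n → Bool) ≃ (Fin n → Bool) where
  toFun s := fun i => xor (θ i) (s i)
  invFun s := fun i => xor (θ i) (s i)
  left_inv s := by funext i; simp
  right_inv s := by funext i; simp

def permEquiv {n : ℕ} (e : Fin n ≃ Fin n) : (Fin n → Bool) ≃ (Fin n → Bool) where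
  toFun s := s ∘ e
  invFun s := s ∘ e.symm
  left_inv s := by funext i; simp
  right_inv s := by funext i; simp

lemma sign_indep (m : ℕ) (i : Fin (m+1)) :
    ∑ s : Fin (m+1) → Bool, ((SZ s).sign : ℝ) * chi s i
      = ∑ s : Fin (m+1) → Bool, ((SZ s).sign : ℝ) * chi s 0 := by
  have h := Equiv.sum_comp (permEquiv (Equiv.swap i 0))
    (fun s : Fin (m+1) → Bool => ((SZ s).sign : ℝ) * chi s i)
  rw [← h]
  apply Finset.sum_congr rfl
  intro s _
  have hS : SZ ((permEquiv (Equiv.swap i 0)) s) = SZ s := by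
    unfold SZ
    exact Equiv.sum_comp (Equiv.swap i 0) (fun j => chiZ (s j))
  have hchi : chi ((permEquiv (Equiv.swap i 0)) s) i = chi s 0 := by
    unfold chi
    have : (permEquiv (Equiv.swap i 0)) s i = s 0 := by
      show s ((Equiv.swap i 0) i) = s 0
      rw [Equiv.swap_apply_left]
    rw [this]
  rw [hS, hchi]


lemma sgn_diff (t : ℤ) : (((t+1).sign : ℤ):ℝ) - (((t-1).sign : ℤ):ℝ)
    = 2*(if t = 0 then (1:ℝ) else 0) + (if t = 1 then 1 else 0) + (if t = -1 then 1 else 0) := by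
  by_cases h0 : t = 0
  · subst h0; norm_num
  by_cases h1 : t = 1
  · subst h1
    have e1 : ((1:ℤ)+1).sign = 1 := by decide
    have e2 : ((1:ℤ)-1).sign = 0 := by decide
    rw [e1, e2]; norm_num
  by_cases h2 : t = -1
  · subst h2
    have e1 : ((-1:ℤ)+1).sign = 0 := by decide
    have e2 : ((-1:ℤ)-1).sign = -1 := by decide
    rw [e1, e2]; norm_num
  rcases lt_or_gt_of_ne h0 with hneg | hpos
  · have ha : t + 1 < 0 := by omega
    have hb : t - 1 < 0 := by omega
    rw [Int.sign_eq_neg_one_of_neg ha, Int.sign_eq_neg_one_of_neg hb]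
    simp [h0, h1, h2]
  · have ha : 0 < t + 1 := by omega
    have hb : 0 < t - 1 := by omega
    rw [Int.sign_eq_one_of_pos ha, Int.sign_eq_one_of_pos hb]
    simp [h0, h1, h2]

lemma Dcoef0 (m : ℕ) :
    ∑ s : Fin (m+1) → Bool, (((SZ s).sign : ℤ) : ℝ) * chi s 0 = Dval m := by
  rw [← Equiv.sum_comp (Fin.consEquiv (fun _ : Fin (m+1) => Bool))
    (fun s : Fin (m+1) → Bool => (((SZ s).sign : ℤ) : ℝ) * chi s 0)]
  rw [Fintype.sum_prod_type, Fintype.sum_bool]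
  have hSZ : ∀ (b : Bool) (s' : Fin m → Bool), SZ (Fin.cons b s') = chiZ b + SZ s' := by
    intro b s'
    unfold SZ
    rw [Fin.sum_univ_succ]
    simp [Fin.cons_zero, Fin.cons_succ]
  have hchi : ∀ (b : Bool) (s' : Fin m → Bool),
      chi (Fin.cons b s') 0 = ((chiZ b : ℤ) : ℝ) := by
    intro b s'; unfold chi; rw [Fin.cons_zero]
  have key : ∀ s' : Fin m → Bool,
      (((SZ (Fin.cons true s')).sign : ℤ) : ℝ) * chi (Fin.cons true s') 0
      + (((SZ (Fin.cons false s')).sign : ℤ) : ℝ) * chi (Fin.cons false s') 0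
      = 2*(if SZ s' = 0 then (1:ℝ) else 0) + (if SZ s' = 1 then 1 else 0)
        + (if SZ s' = -1 then 1 else 0) := by
    intro s'
    rw [hchi, hchi, hSZ, hSZ]
    have e1 : chiZ true + SZ s' = SZ s' + 1 := by unfold chiZ; simp; ring
    have e2 : chiZ false + SZ s' = SZ s' - 1 := by unfold chiZ; simp; ring
    rw [e1, e2]
    have : ((chiZ true : ℤ):ℝ) = 1 := by unfold chiZ; norm_num
    rw [this]
    have : ((chiZ false : ℤ):ℝ) = -1 := by unfold chiZ; norm_num
    rw [this]
    rw [← sgn_diff (SZ s')]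
    ring
  -- combine the two sums into one over s'
  have hmerge : ∑ s' : Fin m → Bool,
        ((((SZ (Fin.cons true s')).sign : ℤ) : ℝ) * chi (Fin.cons true s') 0
        + (((SZ (Fin.cons false s')).sign : ℤ) : ℝ) * chi (Fin.cons false s') 0)
      = Dval m := by
    rw [Finset.sum_congr rfl (fun s' _ => key s')]
    rw [Finset.sum_add_distrib, Finset.sum_add_distrib, ← Finset.mul_sum]
    rw [Finset.sum_boole, Finset.sum_boole, Finset.sum_boole]
    unfold Dval Ncnt
    norm_num
  rw [← hmerge]
  exact Finset.sum_add_distrib.symm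

lemma Dcoef (m : ℕ) (i : Fin (m+1)) :
    ∑ s : Fin (m+1) → Bool, (((SZ s).sign : ℤ) : ℝ) * chi s i = Dval m := by
  rw [sign_indep m i, Dcoef0]

lemma sign_mul_le (t : ℤ) (x : ℝ) : ((t.sign : ℤ) : ℝ) * x ≤ |x| := by
  have h : |((t.sign : ℤ) : ℝ)| ≤ 1 := by
    have htri : t.sign = 1 ∨ t.sign = 0 ∨ t.sign = -1 := by
      rcases lt_trichotomy t 0 with h | h | h
      · exact Or.inr (Or.inr (Int.sign_eq_neg_one_of_neg h))
      · exact Or.inr (Or.inl (by rw [h]; rfl))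
      · exact Or.inl (Int.sign_eq_one_of_pos h)
    rcases htri with h | h | h <;> rw [h] <;> norm_num
  calc ((t.sign : ℤ) : ℝ) * x ≤ |((t.sign : ℤ) : ℝ) * x| := le_abs_self _
    _ = |((t.sign : ℤ) : ℝ)| * |x| := abs_mul _ _
    _ ≤ 1 * |x| := by apply mul_le_mul_of_nonneg_right h (abs_nonneg x)
    _ = |x| := one_mul _

lemma lemmaA (m : ℕ) (B : Fin (m+1) → ℝ) :
    Dval m * ∑ i, |B i| ≤ ∑ s : Fin (m+1) → Bool, |∑ i, B i * chi s i| := by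
  classical
  set θ : Fin (m+1) → Bool := fun i => decide (B i < 0) with hθ
  have hpt : ∀ (s : Fin (m+1) → Bool) (i : Fin (m+1)),
      |B i| * chi s i = B i * chi (xorEquiv θ s) i := by
    intro s i
    show |B i| * ((chiZ (s i) : ℤ) : ℝ) = B i * ((chiZ (xor (θ i) (s i)) : ℤ) : ℝ)
    by_cases h : B i < 0
    · have hti : θ i = true := by rw [hθ]; simp [h]
      rw [hti]
      cases hsi : s i <;> simp [chiZ, abs_of_neg h] <;> ring
    · have hti : θ i = false := by rw [hθ]; simp [h]
      rw [hti]
      cases hsi : s i <;> simp [chiZ, abs_of_nonneg (not_lt.mp h)]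
  have hre : ∑ s : Fin (m+1) → Bool, |∑ i, |B i| * chi s i|
      = ∑ s : Fin (m+1) → Bool, |∑ i, B i * chi s i| := by
    rw [← Equiv.sum_comp (xorEquiv θ)
      (fun s : Fin (m+1) → Bool => |∑ i, B i * chi s i|)]
    apply Finset.sum_congr rfl
    intro s _
    congr 1
    exact Finset.sum_congr rfl (fun i _ => hpt s i)
  rw [← hre]
  have hlow : ∀ s : Fin (m+1) → Bool,
      (((SZ s).sign : ℤ) : ℝ) * (∑ i, |B i| * chi s i) ≤ |∑ i, |B i| * chi s i| :=
    fun s => sign_mul_le _ _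
  calc Dval m * ∑ i, |B i| = ∑ i, |B i| * Dval m := by
        rw [Finset.mul_sum]
        exact Finset.sum_congr rfl fun i _ => mul_comm _ _
    _ = ∑ i, |B i| * ∑ s : Fin (m+1) → Bool, (((SZ s).sign : ℤ) : ℝ) * chi s i := by
        apply Finset.sum_congr rfl; intro i _; rw [Dcoef m i]
    _ = ∑ i, ∑ s : Fin (m+1) → Bool, |B i| * ((((SZ s).sign : ℤ) : ℝ) * chi s i) := by
        apply Finset.sum_congr rfl; intro i _; rw [Finset.mul_sum]
    _ = ∑ s : Fin (m+1) → Bool, (((SZ s).sign : ℤ) : ℝ) * (∑ i, |B i| * chi s i) := by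
        rw [Finset.sum_comm]
        apply Finset.sum_congr rfl; intro s _
        rw [Finset.mul_sum]
        apply Finset.sum_congr rfl; intro i _; ring
    _ ≤ ∑ s : Fin (m+1) → Bool, |∑ i, |B i| * chi s i| :=
        Finset.sum_le_sum (fun s _ => hlow s)


lemma chi_pm {n : ℕ} (s : Fin n → Bool) (i : Fin n) : chi s i = 1 ∨ chi s i = -1 := by
  unfold chi chiZ
  cases s i <;> simp

lemma core (m : ℕ) (A : Fin (m+1) → Fin (m+1) → Fin (m+1) → ℝ) :
    ∃ x y z : Fin (m+1) → ℝ,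
      (∀ i, x i = 1 ∨ x i = -1) ∧ (∀ j, y j = 1 ∨ y j = -1) ∧ (∀ k, z k = 1 ∨ z k = -1) ∧
      0 ≤ ∑ i, ∑ j, ∑ k, A i j k * x i * y j * z k ∧
      (1/(2*((m:ℝ)+1))) * (∑ i, ∑ j, ∑ k, |A i j k|)
        ≤ ∑ i, ∑ j, ∑ k, A i j k * x i * y j * z k := by
  classical
  set G : (Fin (m+1) → Bool) → (Fin (m+1) → Bool) → ℝ :=
    fun u v => ∑ i, |∑ j, ∑ k, A i j k * chi u j * chi v k| with hG
  set T : ℝ := ∑ i, ∑ j, ∑ k, |A i j k| with hT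
  have hTnn : 0 ≤ T := by
    rw [hT]
    apply Finset.sum_nonneg; intro i _
    apply Finset.sum_nonneg; intro j _
    apply Finset.sum_nonneg; intro k _
    exact abs_nonneg _
  have hDnn : 0 ≤ Dval m := Dval_nonneg m
  -- step 1 : Dval^2 * T ≤ ∑ u, ∑ v, G u v
  have hH2 : ∀ (i k : Fin (m+1)), Dval m * ∑ j, |A i j k| ≤ ∑ u : Fin (m+1) → Bool, |∑ j, A i j k * chi u j| :=
    fun i k => lemmaA m (fun j => A i j k)
  have hH1 : ∀ (i : Fin (m+1)) (u : Fin (m+1) → Bool),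
      Dval m * ∑ k, |∑ j, A i j k * chi u j| ≤ ∑ v : Fin (m+1) → Bool, |∑ j, ∑ k, A i j k * chi u j * chi v k| := by
    intro i u
    have h := lemmaA m (fun k => ∑ j, A i j k * chi u j)
    have he : ∀ v : Fin (m+1) → Bool,
        ∑ j, ∑ k, A i j k * chi u j * chi v k = ∑ k, (∑ j, A i j k * chi u j) * chi v k := by
      intro v
      rw [Finset.sum_comm]
      exact Finset.sum_congr rfl fun k _ => by rw [Finset.sum_mul]
    calc Dval m * ∑ k, |∑ j, A i j k * chi u j|
        ≤ ∑ v : Fin (m+1) → Bool, |∑ k, (∑ j, A i j k * chi u j) * chi v k| := h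
      _ = ∑ v : Fin (m+1) → Bool, |∑ j, ∑ k, A i j k * chi u j * chi v k| :=
          Finset.sum_congr rfl fun v _ => by rw [he v]
  have hstep1 : Dval m ^ 2 * T ≤ ∑ u : Fin (m+1) → Bool, ∑ v : Fin (m+1) → Bool, G u v := by
    set U : ℝ := ∑ u : Fin (m+1) → Bool, ∑ i : Fin (m+1), ∑ k : Fin (m+1), |∑ j, A i j k * chi u j| with hU
    have ha : Dval m * T ≤ U := by
      have hTr : T = ∑ i : Fin (m+1), ∑ k : Fin (m+1), ∑ j : Fin (m+1), |A i j k| := by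
        rw [hT]
        exact Finset.sum_congr rfl fun i _ => Finset.sum_comm
      rw [hTr, hU, Finset.mul_sum]
      rw [Finset.sum_comm]
      apply Finset.sum_le_sum
      intro i _
      rw [Finset.mul_sum]
      rw [Finset.sum_comm]
      apply Finset.sum_le_sum
      intro k _
      exact hH2 i k
    have hb : Dval m * U ≤ ∑ u : Fin (m+1) → Bool, ∑ v : Fin (m+1) → Bool, G u v := by
      rw [hU, Finset.mul_sum]
      apply Finset.sum_le_sum
      intro u _
      rw [Finset.mul_sum]
      calc ∑ i : Fin (m+1), Dval m * ∑ k, |∑ j, A i j k * chi u j|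
          ≤ ∑ i : Fin (m+1), ∑ v : Fin (m+1) → Bool, |∑ j, ∑ k, A i j k * chi u j * chi v k| :=
            Finset.sum_le_sum fun i _ => hH1 i u
        _ = ∑ v : Fin (m+1) → Bool, G u v := Finset.sum_comm
    calc Dval m ^ 2 * T = Dval m * (Dval m * T) := by ring
      _ ≤ Dval m * U := by apply mul_le_mul_of_nonneg_left ha hDnn
      _ ≤ _ := hb
  -- step 2 : find a maximizing pair
  obtain ⟨w, -, hw⟩ := Finset.exists_max_image
    (Finset.univ : Finset ((Fin (m+1) → Bool) × (Fin (m+1) → Bool))) (fun p => G p.1 p.2)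
    ⟨(fun _ => true, fun _ => true), Finset.mem_univ _⟩
  have hsum_eq : ∑ u : Fin (m+1) → Bool, ∑ v : Fin (m+1) → Bool, G u v
      = ∑ p : (Fin (m+1) → Bool) × (Fin (m+1) → Bool), G p.1 p.2 := by
    rw [Fintype.sum_prod_type]
  have hcard : (Fintype.card ((Fin (m+1) → Bool) × (Fin (m+1) → Bool)) : ℝ) = (4:ℝ)^(m+1) := by
    simp [Fintype.card_prod, Fintype.card_fun, Fintype.card_bool, Fintype.card_fin]
    rw [← pow_add]
    norm_num
    rw [show (m+1) + (m+1) = 2*(m+1) by ring, pow_mul]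
    norm_num
  have hGmax_nn : 0 ≤ G w.1 w.2 := by
    have := hw (fun _ => true, fun _ => true) (Finset.mem_univ _)
    have h0 : 0 ≤ G (fun _ => true) (fun _ => true) := by
      rw [hG]
      apply Finset.sum_nonneg; intro i _
      exact abs_nonneg _
    exact le_trans h0 this
  have hbound : Dval m ^ 2 * T ≤ (4:ℝ)^(m+1) * G w.1 w.2 := by
    calc Dval m ^ 2 * T ≤ ∑ p : (Fin (m+1) → Bool) × (Fin (m+1) → Bool), G p.1 p.2 := by
          rw [← hsum_eq]; exact hstep1
      _ ≤ ∑ _p : (Fin (m+1) → Bool) × (Fin (m+1) → Bool), G w.1 w.2 :=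
          Finset.sum_le_sum fun p _ => hw p (Finset.mem_univ _)
      _ = (Fintype.card ((Fin (m+1) → Bool) × (Fin (m+1) → Bool)) : ℝ) * G w.1 w.2 := by
          rw [Finset.sum_const, Finset.card_univ, nsmul_eq_mul]
      _ = (4:ℝ)^(m+1) * G w.1 w.2 := by rw [hcard]
  have hkey : T ≤ 2*((m:ℝ)+1) * G w.1 w.2 := by
    have hds := Dval_sq m
    have h4 : (0:ℝ) < (4:ℝ)^(m+1) := by positivity
    -- 4^n * T ≤ 2(m+1) * Dval^2 * T ≤ 2(m+1) * 4^n * G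
    have h1 : (4:ℝ)^(m+1) * T ≤ (2*((m:ℝ)+1) * Dval m ^2) * T := by
      apply mul_le_mul_of_nonneg_right _ hTnn
      exact_mod_cast hds
    have h2 : (2*((m:ℝ)+1)) * (Dval m ^2 * T) ≤ (2*((m:ℝ)+1)) * ((4:ℝ)^(m+1) * G w.1 w.2) := by
      apply mul_le_mul_of_nonneg_left hbound (by positivity)
    have h3 : (4:ℝ)^(m+1) * T ≤ (4:ℝ)^(m+1) * (2*((m:ℝ)+1) * G w.1 w.2) := by nlinarith
    exact (mul_le_mul_iff_right₀ h4).mp h3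
  -- step 3 : build the sign vectors
  set wgt : Fin (m+1) → ℝ := fun i => ∑ j, ∑ k, A i j k * chi w.1 j * chi w.2 k with hwgt
  set xs : Fin (m+1) → ℝ := fun i => if wgt i < 0 then -1 else 1 with hxs
  refine ⟨xs, chi w.1, chi w.2, ?_, fun j => chi_pm _ j, fun k => chi_pm _ k, ?_, ?_⟩
  · intro i
    rw [hxs]
    by_cases h : wgt i < 0 <;> simp [h]
  · have hval : ∑ i, ∑ j, ∑ k, A i j k * xs i * chi w.1 j * chi w.2 k = G w.1 w.2 := by
      rw [hG]
      apply Finset.sum_congr rfl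
      intro i _
      have hrow : ∑ j, ∑ k, A i j k * xs i * chi w.1 j * chi w.2 k = xs i * wgt i := by
        rw [hwgt, Finset.mul_sum]
        apply Finset.sum_congr rfl
        intro j _
        rw [Finset.mul_sum]
        apply Finset.sum_congr rfl
        intro k _
        ring
      rw [hrow]
      rw [hxs]
      by_cases h : wgt i < 0
      · simp only [h, if_pos]
        rw [abs_of_neg h]; ring
      · simp only [h, if_neg, not_false_iff]
        rw [abs_of_nonneg (not_lt.mp h)]; ring
    rw [hval]
    exact hGmax_nn
  · have hval : ∑ i, ∑ j, ∑ k, A i j k * xs i * chi w.1 j * chi w.2 k = G w.1 w.2 := by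
      rw [hG]
      apply Finset.sum_congr rfl
      intro i _
      have hrow : ∑ j, ∑ k, A i j k * xs i * chi w.1 j * chi w.2 k = xs i * wgt i := by
        rw [hwgt, Finset.mul_sum]
        apply Finset.sum_congr rfl
        intro j _
        rw [Finset.mul_sum]
        apply Finset.sum_congr rfl
        intro k _
        ring
      rw [hrow]
      rw [hxs]
      by_cases h : wgt i < 0
      · simp only [h, if_pos]
        rw [abs_of_neg h]; ring
      · simp only [h, if_neg, not_false_iff]
        rw [abs_of_nonneg (not_lt.mp h)]; ring
    rw [hval]
    rw [one_div, inv_mul_le_iff₀ (by positivity)]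
    exact hkey


lemma toReal_ge_two {p : ℝ≥0∞} (hp : 2 ≤ p) (hpi : p ≠ ∞) : (2:ℝ) ≤ p.toReal := by
  have h2 : ((2:ℝ≥0∞)).toReal = (2:ℝ) := by norm_num
  rw [← h2]
  exact (ENNReal.toReal_le_toReal (by norm_num) hpi).mpr hp

lemma pnorm_pm (m : ℕ) (p : ℝ≥0∞) (hp : 2 ≤ p) (x : Fin (m+1) → ℝ)
    (hx : ∀ i, x i = 1 ∨ x i = -1) :
    pnorm p (fun i => x i * (((m+1:ℕ)):ℝ) ^ (-(1/p).toReal)) = 1 := by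
  have hN : (0:ℝ) < ((m+1:ℕ):ℝ) := by positivity
  have habs : ∀ i, |x i| = 1 := by
    intro i; rcases hx i with h | h <;> rw [h] <;> norm_num
  by_cases hpi : p = ∞
  · subst hpi
    have h0 : (1/(⊤:ℝ≥0∞)).toReal = 0 := by simp
    rw [h0]
    unfold pnorm
    rw [if_pos rfl]
    have hone : ∀ i, |x i * ((m+1:ℕ):ℝ) ^ (-(0:ℝ))| = 1 := by
      intro i
      rw [neg_zero, Real.rpow_zero, mul_one, habs i]
    rw [show (fun i => |x i * ((m+1:ℕ):ℝ) ^ (-(0:ℝ))|) = fun _ : Fin (m+1) => (1:ℝ) from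
      funext hone]
    exact ciSup_const
  · have hpt : (2:ℝ) ≤ p.toReal := toReal_ge_two hp hpi
    have hptpos : (0:ℝ) < p.toReal := by linarith
    have hinv : (1/p).toReal = 1/p.toReal := by
      rw [one_div, one_div, ENNReal.toReal_inv]
    unfold pnorm
    rw [if_neg hpi, hinv]
    have hterm : ∀ i : Fin (m+1),
        |x i * ((m+1:ℕ):ℝ) ^ (-(1/p.toReal))| ^ p.toReal = ((m+1:ℕ):ℝ)⁻¹ := by
      intro i
      rw [abs_mul, habs i, one_mul,
        abs_of_nonneg (Real.rpow_nonneg (le_of_lt hN) _),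
        ← Real.rpow_mul (le_of_lt hN),
        show (-(1/p.toReal))*p.toReal = -1 by field_simp,
        Real.rpow_neg_one]
    rw [Finset.sum_congr rfl (fun i _ => hterm i), Finset.sum_const, Finset.card_univ,
      Fintype.card_fin, nsmul_eq_mul, mul_inv_cancel₀ (ne_of_gt hN), Real.one_rpow]

lemma abs_le_one_of_pnorm {n : ℕ} (p : ℝ≥0∞) (hp : 2 ≤ p) (x : Fin n → ℝ)
    (hx : pnorm p x = 1) (i : Fin n) : |x i| ≤ 1 := by
  by_cases hpi : p = ∞
  · subst hpi
    unfold pnorm at hx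
    rw [if_pos rfl] at hx
    rw [← hx]
    exact le_ciSup (f := fun j => |x j|) (Set.Finite.bddAbove (Set.finite_range _)) i
  · have hpt : (2:ℝ) ≤ p.toReal := toReal_ge_two hp hpi
    have hptpos : (0:ℝ) < p.toReal := by linarith
    unfold pnorm at hx
    rw [if_neg hpi] at hx
    have hnn : ∀ j ∈ (univ : Finset (Fin n)), (0:ℝ) ≤ |x j| ^ p.toReal :=
      fun j _ => Real.rpow_nonneg (abs_nonneg _) _
    have hSnn : (0:ℝ) ≤ ∑ j, |x j| ^ p.toReal := Finset.sum_nonneg hnn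
    have hS : ∑ j, |x j| ^ p.toReal = 1 := by
      have h := congrArg (fun t : ℝ => t ^ p.toReal) hx
      simp only [Real.one_rpow] at h
      rw [← Real.rpow_mul hSnn, one_div,
        inv_mul_cancel₀ (ne_of_gt hptpos), Real.rpow_one] at h
      exact h
    have hone : |x i| ^ p.toReal ≤ 1 := by
      rw [← hS]
      exact Finset.single_le_sum hnn (Finset.mem_univ i)
    by_contra hgt
    push_neg at hgt
    have : 1 < |x i| ^ p.toReal := by
      rw [Real.one_lt_rpow_iff (abs_nonneg _)]
      exact Or.inl ⟨hgt, hptpos⟩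
    linarith

lemma pnorm_ne_one_zero (p : ℝ≥0∞) (hp : 2 ≤ p) (x : Fin 0 → ℝ) : pnorm p x ≠ 1 := by
  by_cases hpi : p = ∞
  · subst hpi
    unfold pnorm
    rw [if_pos rfl, Real.iSup_of_isEmpty]
    norm_num
  · have hpt : (2:ℝ) ≤ p.toReal := toReal_ge_two hp hpi
    unfold pnorm
    rw [if_neg hpi]
    rw [show (∑ i : Fin 0, |x i| ^ p.toReal) = 0 from rfl]
    rw [Real.zero_rpow (by positivity)]
    norm_num

end Stmt0Aux

theorem stmt0 (n : ℕ) (p q r : ℝ≥0∞) (hp : 2 ≤ p) (hpq : p ≤ q) (hqr : q ≤ r)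
    (A : Fin n → Fin n → Fin n → ℝ) :
    sSup {t : ℝ | ∃ x y z : Fin n → ℝ, pnorm p x = 1 ∧ pnorm q y = 1 ∧ pnorm r z = 1 ∧
        t = |∑ i, ∑ j, ∑ k, A i j k * x i * y j * z k|} ≥
      (1 / 2) * (n : ℝ) ^ (-(1 / p).toReal - (1 / q).toReal - (1 / r).toReal - 1) *
        ∑ i, ∑ j, ∑ k, |A i j k| := by
  have hq : 2 ≤ q := le_trans hp hpq
  have hr : 2 ≤ r := le_trans hq hqr
  rcases n with _ | m
  · -- n = 0 : the constraint set is empty and both sides are 0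
    have hempty : {t : ℝ | ∃ x y z : Fin 0 → ℝ, pnorm p x = 1 ∧ pnorm q y = 1 ∧ pnorm r z = 1 ∧
        t = |∑ i, ∑ j, ∑ k, A i j k * x i * y j * z k|} = ∅ := by
      ext t
      simp only [Set.mem_setOf_eq, Set.mem_empty_iff_false, iff_false, not_exists]
      intro x y z h
      exact absurd h.1 (Stmt0Aux.pnorm_ne_one_zero p hp x)
    rw [hempty, Real.sSup_empty]
    simp
  · -- n = m + 1
    obtain ⟨xs, ys, zs, hxs, hys, hzs, hnn, hmain⟩ := Stmt0Aux.core m A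
    set S : Set ℝ := {t : ℝ | ∃ x y z : Fin (m+1) → ℝ,
        pnorm p x = 1 ∧ pnorm q y = 1 ∧ pnorm r z = 1 ∧
        t = |∑ i, ∑ j, ∑ k, A i j k * x i * y j * z k|} with hS
    have hNpos : (0:ℝ) < ((m+1:ℕ):ℝ) := by positivity
    have hpx : pnorm p (fun i => xs i * ((m+1:ℕ):ℝ) ^ (-(1/p).toReal)) = 1 :=
      Stmt0Aux.pnorm_pm m p hp xs hxs
    have hpy : pnorm q (fun j => ys j * ((m+1:ℕ):ℝ) ^ (-(1/q).toReal)) = 1 :=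
      Stmt0Aux.pnorm_pm m q hq ys hys
    have hpz : pnorm r (fun k => zs k * ((m+1:ℕ):ℝ) ^ (-(1/r).toReal)) = 1 :=
      Stmt0Aux.pnorm_pm m r hr zs hzs
    set γp : ℝ := ((m+1:ℕ):ℝ) ^ (-(1/p).toReal) with hγp
    set γq : ℝ := ((m+1:ℕ):ℝ) ^ (-(1/q).toReal) with hγq
    set γr : ℝ := ((m+1:ℕ):ℝ) ^ (-(1/r).toReal) with hγr
    have hγppos : 0 < γp := Real.rpow_pos_of_pos hNpos _
    have hγqpos : 0 < γq := Real.rpow_pos_of_pos hNpos _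
    have hγrpos : 0 < γr := Real.rpow_pos_of_pos hNpos _
    have hmem : |∑ i, ∑ j, ∑ k,
        A i j k * (xs i * γp) * (ys j * γq) * (zs k * γr)| ∈ S := by
      rw [hS]
      exact ⟨_, _, _, hpx, hpy, hpz, rfl⟩
    have h1 : ∑ i, ∑ j, ∑ k, A i j k * (xs i * γp) * (ys j * γq) * (zs k * γr)
        = (γp*γq*γr) * ∑ i, ∑ j, ∑ k, A i j k * xs i * ys j * zs k := by
      rw [Finset.mul_sum]
      refine Finset.sum_congr rfl fun i _ => ?_
      rw [Finset.mul_sum]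
      refine Finset.sum_congr rfl fun j _ => ?_
      rw [Finset.mul_sum]
      refine Finset.sum_congr rfl fun k _ => ?_
      ring
    have hval : |∑ i, ∑ j, ∑ k, A i j k * (xs i * γp) * (ys j * γq) * (zs k * γr)|
        = (γp*γq*γr) * ∑ i, ∑ j, ∑ k, A i j k * xs i * ys j * zs k := by
      rw [h1]
      exact abs_of_nonneg (mul_nonneg (by positivity) hnn)
    have hRHS : (1 / 2) * ((m+1:ℕ):ℝ) ^ (-(1 / p).toReal - (1 / q).toReal - (1 / r).toReal - 1) *
        (∑ i, ∑ j, ∑ k, |A i j k|)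
        ≤ (γp*γq*γr) * ∑ i, ∑ j, ∑ k, A i j k * xs i * ys j * zs k := by
      have hsplit : ((m+1:ℕ):ℝ) ^ (-(1/p).toReal - (1/q).toReal - (1/r).toReal - 1)
          = γp * γq * γr * ((m+1:ℕ):ℝ)⁻¹ := by
        rw [show -(1/p).toReal - (1/q).toReal - (1/r).toReal - 1
            = (-(1/p).toReal) + ((-(1/q).toReal) + ((-(1/r).toReal) + (-1))) by ring]
        rw [Real.rpow_add hNpos, Real.rpow_add hNpos, Real.rpow_add hNpos, Real.rpow_neg_one]
        rw [hγp, hγq, hγr]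
        ring
      rw [hsplit]
      have hfrac : (1/2) * (γp*γq*γr*((m+1:ℕ):ℝ)⁻¹) * (∑ i, ∑ j, ∑ k, |A i j k|)
          = (γp*γq*γr) * ((1/(2*((m:ℝ)+1))) * (∑ i, ∑ j, ∑ k, |A i j k|)) := by
        have hc : ((m+1:ℕ):ℝ) = (m:ℝ)+1 := by push_cast; ring
        rw [hc]
        have hm1 : ((m:ℝ)+1) ≠ 0 := by positivity
        field_simp
      rw [hfrac]
      exact mul_le_mul_of_nonneg_left hmain (by positivity)
    have hbdd : BddAbove S := by
      refine ⟨∑ i, ∑ j, ∑ k, |A i j k|, ?_⟩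
      rintro t ⟨x, y, z, hx, hy, hz, rfl⟩
      have hterm : ∀ i j k, |A i j k * x i * y j * z k| ≤ |A i j k| := by
        intro i j k
        have hx1 := Stmt0Aux.abs_le_one_of_pnorm p hp x hx i
        have hy1 := Stmt0Aux.abs_le_one_of_pnorm q hq y hy j
        have hz1 := Stmt0Aux.abs_le_one_of_pnorm r hr z hz k
        rw [abs_mul, abs_mul, abs_mul]
        calc |A i j k| * |x i| * |y j| * |z k|
            ≤ |A i j k| * 1 * |y j| * |z k| := by
              apply mul_le_mul_of_nonneg_right _ (abs_nonneg _)
              apply mul_le_mul_of_nonneg_right _ (abs_nonneg _)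
              exact mul_le_mul_of_nonneg_left hx1 (abs_nonneg _)
          _ ≤ |A i j k| * 1 * 1 * |z k| := by
              apply mul_le_mul_of_nonneg_right _ (abs_nonneg _)
              rw [mul_one]
              exact mul_le_mul_of_nonneg_left hy1 (by positivity)
          _ ≤ |A i j k| * 1 * 1 * 1 := by
              apply mul_le_mul_of_nonneg_left hz1 (by positivity)
          _ = |A i j k| := by ring
      calc |∑ i, ∑ j, ∑ k, A i j k * x i * y j * z k|
          ≤ ∑ i, |∑ j, ∑ k, A i j k * x i * y j * z k| := Finset.abs_sum_le_sum_abs _ _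
        _ ≤ ∑ i, ∑ j, ∑ k, |A i j k| := by
            apply Finset.sum_le_sum
            intro i _
            calc |∑ j, ∑ k, A i j k * x i * y j * z k|
                ≤ ∑ j, |∑ k, A i j k * x i * y j * z k| := Finset.abs_sum_le_sum_abs _ _
              _ ≤ ∑ j, ∑ k, |A i j k| := by
                  apply Finset.sum_le_sum
                  intro j _
                  calc |∑ k, A i j k * x i * y j * z k|
                      ≤ ∑ k, |A i j k * x i * y j * z k| := Finset.abs_sum_le_sum_abs _ _
                    _ ≤ ∑ k, |A i j k| := Finset.sum_le_sum fun k _ => hterm i j k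
    exact le_trans hRHS (hval ▸ le_csSup hbdd hmem)
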